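/- Let (E, 𝒯) be a measurable space, 𝓕 a nonempty index set, (m_θ)_{θ∈𝓕} a family of measures on (E,𝒯), and p ∈ [1,∞). Define L^p(E, 𝒯, (m_θ)_{θ∈𝓕}) as the set of equivalence classes (f ~ g iff f = g m_θ-a.e. for every θ) of functions f : E → ℝ such that there is M > 0 with: for every θ there exists f_θ ∈ L^p(m_θ) with f = f_θ m_θ-a.e. and ∫|f_θ|^p dm_θ ≤ M. Then this space, with the norm ‖f‖_p = sup_{θ∈𝓕} (∫_E |f|^p dm_θ)^{1/p}, is a complete normed space (a Banach space). -/

import Mathlib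

open MeasureTheory
open scoped ENNReal

/-- Membership in `L^p(E, 𝒯, (m_θ)_{θ∈𝓕})`: `f` agrees `m_θ`-a.e. with an element of
`L^p(m_θ)` for every `θ`, with uniformly bounded `p`-th moments. -/
def MemLpFam {E : Type*} [MeasurableSpace E] {ι : Type*} (m : ι → Measure E)
    (p : ℝ) (f : E → ℝ) : Prop :=
  ∃ M : ℝ, 0 < M ∧ ∀ θ : ι, ∃ fθ : E → ℝ,
    AEStronglyMeasurable fθ (m θ) ∧ f =ᵐ[m θ] fθ ∧
    ∫⁻ x, ENNReal.ofReal (|fθ x| ^ p) ∂(m θ) ≤ ENNReal.ofReal M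

/-- The norm `‖f‖_p = sup_θ (∫ |f|^p dm_θ)^{1/p}` (valued in `ℝ≥0∞`). -/
noncomputable def famNorm {E : Type*} [MeasurableSpace E] {ι : Type*}
    (m : ι → Measure E) (p : ℝ) (f : E → ℝ) : ℝ≥0∞ :=
  ⨆ θ : ι, (∫⁻ x, ENNReal.ofReal (|f x| ^ p) ∂(m θ)) ^ (1 / p)

lemma lint_abs_rpow_eq {E : Type*} [MeasurableSpace E] (μ : Measure E) {p : ℝ} (hp : 0 ≤ p)
    (h : E → ℝ) :
    ∫⁻ x, ENNReal.ofReal (|h x| ^ p) ∂μ = ∫⁻ x, ‖h x‖ₑ ^ p ∂μ := by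
  refine lintegral_congr fun x => ?_
  rw [Real.enorm_eq_ofReal_abs, ENNReal.ofReal_rpow_of_nonneg (abs_nonneg _) hp]

lemma famNorm_eq {E : Type*} [MeasurableSpace E] {ι : Type*} (m : ι → Measure E)
    {p : ℝ} (hp : 0 ≤ p) (h : E → ℝ) :
    famNorm m p h = ⨆ θ : ι, eLpNorm' h p (m θ) := by
  unfold famNorm eLpNorm'
  refine iSup_congr fun θ => ?_
  rw [lint_abs_rpow_eq (m θ) hp]

lemma eLpNorm'_le_famNorm {E : Type*} [MeasurableSpace E] {ι : Type*} (m : ι → Measure E)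
    {p : ℝ} (hp : 0 ≤ p) (h : E → ℝ) (θ : ι) :
    eLpNorm' h p (m θ) ≤ famNorm m p h := by
  rw [famNorm_eq m hp]
  exact le_iSup (fun θ => eLpNorm' h p (m θ)) θ

/-- `L^p(E, 𝒯, (m_θ)_{θ∈𝓕})` is complete: every Cauchy sequence for the norm
`‖·‖_p = sup_θ ‖·‖_{L^p(m_θ)}` converges (up to the equivalence `f ~ g` iff
`f = g` `m_θ`-a.e. for all `θ`, convergence in norm identifies limits). -/
theorem stmt11 {E : Type*} [MeasurableSpace E] {ι : Type*} [Nonempty ι]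
    (m : ι → Measure E) (p : ℝ) (hp : 1 ≤ p)
    (f : ℕ → E → ℝ) (hf : ∀ n, MemLpFam m p (f n))
    (hcauchy : ∀ ε : ℝ, 0 < ε → ∃ N : ℕ, ∀ q r : ℕ, N ≤ q → N ≤ r →
      famNorm m p (fun x => f q x - f r x) ≤ ENNReal.ofReal ε) :
    ∃ g : E → ℝ, MemLpFam m p g ∧
      Filter.Tendsto (fun n => famNorm m p (fun x => f n x - g x))
        Filter.atTop (nhds 0) := by
  classical
  have hp0 : (0 : ℝ) < p := lt_of_lt_of_le one_pos hp
  -- measurability of each `f n` w.r.t. each `m θ`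
  have hmeas : ∀ n θ, AEStronglyMeasurable (f n) (m θ) := by
    intro n θ
    obtain ⟨M, _, h⟩ := hf n
    obtain ⟨fθ, h1, h2, _⟩ := h θ
    exact h1.congr h2.symm
  -- extract a rapidly Cauchy subsequence
  have hNex := fun k : ℕ => hcauchy ((1/2 : ℝ) ^ k) (by positivity)
  choose N hN using hNex
  set ns : ℕ → ℕ := fun k => (Finset.range (k + 1)).sup N with hns_def
  have hns : ∀ k j, k ≤ j → N k ≤ ns j := fun k j hkj =>
    Finset.le_sup (Finset.mem_range.2 (Nat.lt_succ_of_le hkj))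
  have hsub : ∀ K j l, K ≤ j → K ≤ l →
      famNorm m p (fun x => f (ns j) x - f (ns l) x) ≤ ENNReal.ofReal ((1/2 : ℝ) ^ K) :=
    fun K j l hj hl => hN K _ _ (hns K j hj) (hns K l hl)
  set B : ℕ → ℝ≥0∞ := fun k =>
    ENNReal.ofReal ((1/2 : ℝ) ^ k) + ENNReal.ofReal ((1/2 : ℝ) ^ k) with hB_def
  have hsum : (∑' k, ENNReal.ofReal ((1/2 : ℝ) ^ k)) ≠ ∞ := by
    rw [← ENNReal.ofReal_tsum_of_nonneg (fun n => by positivity)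
      (summable_geometric_of_lt_one (by norm_num) (by norm_num))]
    exact ENNReal.ofReal_ne_top
  have hB : (∑' k, B k) ≠ ∞ := by
    rw [hB_def, ENNReal.tsum_add]
    exact ENNReal.add_ne_top.2 ⟨hsum, hsum⟩
  have hBlt : ∀ K, ENNReal.ofReal ((1/2 : ℝ) ^ K) < B K := by
    intro K
    exact ENNReal.lt_add_right ENNReal.ofReal_ne_top
      (ENNReal.ofReal_pos.2 (by positivity)).ne'
  have h_cau' : ∀ θ, ∀ K j l : ℕ, K ≤ j → K ≤ l →
      eLpNorm' ((fun k => f (ns k)) j - (fun k => f (ns k)) l) p (m θ) < B K := by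
    intro θ K j l hj hl
    refine lt_of_le_of_lt ?_ (hBlt K)
    refine le_trans ?_ (hsub K j l hj hl)
    exact eLpNorm'_le_famNorm m hp0.le _ θ
  have h_ae : ∀ θ, ∀ᵐ x ∂(m θ), ∃ l : ℝ,
      Filter.Tendsto (fun k => f (ns k) x) Filter.atTop (nhds l) := by
    intro θ
    exact MeasureTheory.Lp.ae_tendsto_of_cauchy_eLpNorm'
      (fun k => hmeas (ns k) θ) hp hB (h_cau' θ)
  -- define the limit function
  set g : E → ℝ := fun x =>
    if h : ∃ l : ℝ, Filter.Tendsto (fun k => f (ns k) x) Filter.atTop (nhds l)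
    then h.choose else 0 with hg_def
  have h_lim : ∀ θ, ∀ᵐ x ∂(m θ),
      Filter.Tendsto (fun k => f (ns k) x) Filter.atTop (nhds (g x)) := by
    intro θ
    filter_upwards [h_ae θ] with x hx
    rw [hg_def]
    simp only [dif_pos hx]
    exact hx.choose_spec
  have hgmeas : ∀ θ, AEStronglyMeasurable g (m θ) := fun θ =>
    aestronglyMeasurable_of_tendsto_ae Filter.atTop (fun k => hmeas (ns k) θ) (h_lim θ)
  -- uniform bound on the subsequence tails
  have hkey : ∀ K θ, eLpNorm' (fun x => f (ns K) x - g x) p (m θ) ≤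
      ENNReal.ofReal ((1/2 : ℝ) ^ K) := by
    intro K θ
    have h1 : eLpNorm' (fun x => f (ns K) x - g x) p (m θ) ≤
        Filter.atTop.liminf fun j => eLpNorm' (fun x => f (ns K) x - f (ns j) x) p (m θ) := by
      refine MeasureTheory.Lp.eLpNorm'_lim_le_liminf_eLpNorm' hp0
        (f := fun j => fun x => f (ns K) x - f (ns j) x)
        (fun j => (hmeas (ns K) θ).sub (hmeas (ns j) θ)) ?_
      filter_upwards [h_lim θ] with x hx
      exact Filter.Tendsto.const_sub _ hx
    refine h1.trans (Filter.liminf_le_of_frequently_le' ?_)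
    refine Filter.Eventually.frequently ?_
    filter_upwards [Filter.eventually_ge_atTop K] with j hj
    exact (eLpNorm'_le_famNorm m hp0.le _ θ).trans (hsub K K j le_rfl hj)
  have hkeyFam : ∀ K, famNorm m p (fun x => f (ns K) x - g x) ≤
      ENNReal.ofReal ((1/2 : ℝ) ^ K) := by
    intro K
    rw [famNorm_eq m hp0.le]
    exact iSup_le fun θ => hkey K θ
  -- `g` belongs to the space
  obtain ⟨M₀, hM₀pos, hM₀⟩ := hf (ns 0)
  have hsg : ∀ θ, eLpNorm' g p (m θ) ≤ (ENNReal.ofReal M₀) ^ (1/p) + 1 := by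
    intro θ
    have hdecomp : g = f (ns 0) + (g - f (ns 0)) := by
      funext x; simp
    calc eLpNorm' g p (m θ)
        ≤ eLpNorm' (f (ns 0)) p (m θ) + eLpNorm' (g - f (ns 0)) p (m θ) := by
          conv_lhs => rw [hdecomp]
          exact eLpNorm'_add_le (hmeas (ns 0) θ) ((hgmeas θ).sub (hmeas (ns 0) θ)) hp
      _ ≤ (ENNReal.ofReal M₀) ^ (1/p) + 1 := by
          gcongr
          · obtain ⟨fθ, h1, h2, h3⟩ := hM₀ θ
            rw [eLpNorm'_congr_ae h2]
            unfold eLpNorm'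
            rw [← lint_abs_rpow_eq (m θ) hp0.le]
            exact ENNReal.rpow_le_rpow h3 (by positivity)
          · have hne : (g - f (ns 0)) = -(fun x => f (ns 0) x - g x) := by
              funext x; simp [Pi.sub_apply]
            rw [hne, eLpNorm'_neg]
            refine (hkey 0 θ).trans ?_
            simp
  have hMemg : MemLpFam m p g := by
    set C : ℝ≥0∞ := ((ENNReal.ofReal M₀) ^ (1/p) + 1) ^ p with hC_def
    have hC_ne_top : C ≠ ∞ := by
      refine ENNReal.rpow_ne_top_of_nonneg hp0.le ?_
      exact ENNReal.add_ne_top.2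
        ⟨ENNReal.rpow_ne_top_of_nonneg (by positivity) ENNReal.ofReal_ne_top, ENNReal.one_ne_top⟩
    refine ⟨C.toReal + 1, by positivity, fun θ => ?_⟩
    refine ⟨(hgmeas θ).mk g, ((hgmeas θ).stronglyMeasurable_mk).aestronglyMeasurable,
      (hgmeas θ).ae_eq_mk, ?_⟩
    have heq : ∫⁻ x, ENNReal.ofReal (|(hgmeas θ).mk g x| ^ p) ∂(m θ)
        = ∫⁻ x, ENNReal.ofReal (|g x| ^ p) ∂(m θ) := by
      refine lintegral_congr_ae ?_
      filter_upwards [(hgmeas θ).ae_eq_mk] with x hx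
      rw [hx]
    rw [heq, lint_abs_rpow_eq (m θ) hp0.le]
    have h2 : (∫⁻ x, ‖g x‖ₑ ^ p ∂(m θ)) = (eLpNorm' g p (m θ)) ^ p := by
      unfold eLpNorm'
      rw [← ENNReal.rpow_mul, one_div, inv_mul_cancel₀ hp0.ne', ENNReal.rpow_one]
    rw [h2]
    calc (eLpNorm' g p (m θ)) ^ p ≤ C := ENNReal.rpow_le_rpow (hsg θ) hp0.le
      _ ≤ ENNReal.ofReal (C.toReal + 1) := by
          conv_lhs => rw [← ENNReal.ofReal_toReal hC_ne_top]
          exact ENNReal.ofReal_le_ofReal (by linarith)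
  refine ⟨g, hMemg, ?_⟩
  -- convergence of the full sequence
  rw [ENNReal.tendsto_atTop_zero]
  intro ε hε
  obtain ⟨K, hK⟩ := (ENNReal.tendsto_atTop_zero.mp
    (ENNReal.tendsto_atTop_zero_of_tsum_ne_top hB)) ε hε
  refine ⟨N K, fun n hn => ?_⟩
  have htri : famNorm m p (fun x => f n x - g x) ≤
      famNorm m p (fun x => f n x - f (ns K) x) + famNorm m p (fun x => f (ns K) x - g x) := by
    rw [famNorm_eq m hp0.le, famNorm_eq m hp0.le (fun x => f n x - f (ns K) x),
      famNorm_eq m hp0.le (fun x => f (ns K) x - g x)]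
    refine iSup_le fun θ => ?_
    have hd : (fun x => f n x - g x)
        = (fun x => f n x - f (ns K) x) + fun x => f (ns K) x - g x := by
      funext x; simp
    rw [hd]
    refine (eLpNorm'_add_le ((hmeas n θ).sub (hmeas (ns K) θ))
      ((hmeas (ns K) θ).sub (hgmeas θ)) hp).trans ?_
    gcongr
    · exact le_iSup (fun θ => eLpNorm' (fun x => f n x - f (ns K) x) p (m θ)) θ
    · exact le_iSup (fun θ => eLpNorm' (fun x => f (ns K) x - g x) p (m θ)) θ
  refine htri.trans (le_trans ?_ (hK K le_rfl))
  exact add_le_add (hN K n (ns K) hn (hns K K le_rfl)) (hkeyFam K)
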